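/- arXiv:1806.10896 — 2 statements merged into one kernel-verified Lean document; each statement's English description precedes it below -/
import Mathlib

section
/- For every odd positive integer n, the sum over k from 0 to n of binomial(n,k)*binomial(n+k,k)*binomial(2k,k) / ((-4)^k * (k+1)) equals (n/(n+1)) * binomial(n-1, (n-1)/2)^2 / 16^((n-1)/2) (as rational numbers). -/
open Finset

private def Fq (n k : ℕ) : ℚ :=
  (Nat.choose n k * Nat.choose (n + k) k * Nat.choose (2 * k) k : ℚ) / ((-4) ^ k * (k + 1))

private def Gq (n k : ℕ) : ℚ :=
  (k : ℚ) ^ 2 * Nat.choose (n + 2) k * Nat.choose (n + k) k * Nat.choose (2 * k) k / (-4) ^ k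

private def Sq (n : ℕ) : ℚ := ∑ k ∈ Finset.range (n + 1), Fq n k

private def Tq (n : ℕ) : ℚ :=
  if n % 2 = 0 then (Nat.centralBinom (n / 2) : ℚ) ^ 2 / 16 ^ (n / 2)
  else ((n : ℚ) / ((n : ℚ) + 1)) * (Nat.centralBinom (n / 2) : ℚ) ^ 2 / 16 ^ (n / 2)

private lemma aux3 (a k : ℕ) :
    (a + 1) * Nat.choose (a + k + 1) k = (a + k + 1) * Nat.choose (a + k) k := by
  have h1 : Nat.choose (a + k) a = Nat.choose (a + k) k := by
    have := Nat.choose_symm (n := a + k) (k := k) (Nat.le_add_left _ _)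
    simpa using this
  have h2 : Nat.choose (a + k + 1) k = Nat.choose (a + k + 1) (a + 1) := by
    have := Nat.choose_symm (n := a + k + 1) (k := a + 1) (by omega)
    simpa [show a + k + 1 - (a + 1) = k by omega] using this
  have h3 := Nat.add_one_mul_choose_eq (a + k) a
  -- h3 : (a+k).succ * (a+k).choose a = (a+k+1).choose (a+1) * (a+1)
  rw [h1, ← h2] at h3
  calc (a + 1) * Nat.choose (a + k + 1) k = Nat.choose (a + k + 1) k * (a + 1) := by
        rw [Nat.mul_comm]
    _ = (a + k + 1) * Nat.choose (a + k) k := h3.symm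

private lemma step (n k : ℕ) :
    (n : ℚ) * (n + 1) * Fq n k + (2 * n + 3) * Fq (n + 1) k
        - (n + 2) * (n + 3) * Fq (n + 2) k
      = 2 * (2 * n + 3) / (((n : ℚ) + 1) * ((n : ℚ) + 2)) * (Gq n (k + 1) - Gq n k) := by
  rcases le_or_gt k (n + 2) with hk | hk
  · have hn1 : ((n : ℚ) + 1) ≠ 0 := by positivity
    have hn2 : ((n : ℚ) + 2) ≠ 0 := by positivity
    have hk1 : ((k : ℚ) + 1) ≠ 0 := by positivity
    have hq4 : ((-4 : ℚ)) ^ k ≠ 0 := pow_ne_zero _ (by norm_num)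
    have e1 : (Nat.choose n k : ℚ) =
        (Nat.choose (n + 1) k : ℚ) * ((n + 1 - k : ℕ) : ℚ) / ((n : ℚ) + 1) := by
      rw [eq_div_iff hn1]
      exact_mod_cast Nat.choose_mul_succ_eq n k
    have e2 : (Nat.choose (n + 1) k : ℚ) =
        (Nat.choose (n + 2) k : ℚ) * ((n + 2 - k : ℕ) : ℚ) / ((n : ℚ) + 2) := by
      rw [eq_div_iff hn2]
      have := Nat.choose_mul_succ_eq (n + 1) k
      exact_mod_cast this
    have e3 : (Nat.choose (n + 1 + k) k : ℚ) =
        ((n : ℚ) + k + 1) * (Nat.choose (n + k) k : ℚ) / ((n : ℚ) + 1) := by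
      have c2 : ((n : ℚ) + 1) * (Nat.choose (n + k + 1) k : ℚ)
          = ((n : ℚ) + k + 1) * (Nat.choose (n + k) k : ℚ) := by
        exact_mod_cast aux3 n k
      rw [eq_div_iff hn1, show n + 1 + k = n + k + 1 by omega]
      linear_combination c2
    have e4 : (Nat.choose (n + 2 + k) k : ℚ) =
        ((n : ℚ) + k + 2) * ((n : ℚ) + k + 1) * (Nat.choose (n + k) k : ℚ)
          / (((n : ℚ) + 1) * ((n : ℚ) + 2)) := by
      rw [eq_div_iff (mul_ne_zero hn1 hn2), show n + 2 + k = n + 1 + k + 1 by omega]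
      have h1 := aux3 (n + 1) k
      have h2 := aux3 n k
      rw [show n + 1 + k = n + k + 1 by omega] at h1 ⊢
      have c1 : ((n + 2 : ℚ)) * (Nat.choose (n + k + 1 + 1) k : ℚ)
          = ((n : ℚ) + k + 2) * (Nat.choose (n + k + 1) k : ℚ) := by
        exact_mod_cast h1
      have c2 : ((n + 1 : ℚ)) * (Nat.choose (n + k + 1) k : ℚ)
          = ((n : ℚ) + k + 1) * (Nat.choose (n + k) k : ℚ) := by
        exact_mod_cast h2
      calc (Nat.choose (n + k + 1 + 1) k : ℚ) * (((n : ℚ) + 1) * ((n : ℚ) + 2))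
          = ((n : ℚ) + 1) * (((n + 2 : ℚ)) * (Nat.choose (n + k + 1 + 1) k : ℚ)) := by ring
        _ = ((n : ℚ) + k + 2) * (((n + 1 : ℚ)) * (Nat.choose (n + k + 1) k : ℚ)) := by
            rw [c1]; ring
        _ = ((n : ℚ) + k + 2) * ((n : ℚ) + k + 1) * (Nat.choose (n + k) k : ℚ) := by
            rw [c2]; ring
    have e5 : (Nat.choose (n + 2) (k + 1) : ℚ) =
        ((n + 2 - k : ℕ) : ℚ) * (Nat.choose (n + 2) k : ℚ) / ((k : ℚ) + 1) := by
      have c : (Nat.choose (n + 2) (k + 1) : ℚ) * ((k : ℚ) + 1)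
          = (Nat.choose (n + 2) k : ℚ) * ((n + 2 - k : ℕ) : ℚ) := by
        exact_mod_cast Nat.choose_succ_right_eq (n + 2) k
      rw [eq_div_iff hk1]
      linear_combination c
    have e6 : (Nat.choose (n + (k + 1)) (k + 1) : ℚ) =
        ((n : ℚ) + k + 1) * (Nat.choose (n + k) k : ℚ) / ((k : ℚ) + 1) := by
      have c : ((n : ℚ) + k + 1) * (Nat.choose (n + k) k : ℚ)
          = (Nat.choose (n + k + 1) (k + 1) : ℚ) * ((k : ℚ) + 1) := by
        have := Nat.add_one_mul_choose_eq (n + k) k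
        exact_mod_cast this
      rw [eq_div_iff hk1, show n + (k + 1) = n + k + 1 by omega]
      exact c.symm
    have e7 : (Nat.choose (2 * (k + 1)) (k + 1) : ℚ) =
        2 * (2 * (k : ℚ) + 1) * (Nat.choose (2 * k) k : ℚ) / ((k : ℚ) + 1) := by
      have c : ((k : ℚ) + 1) * (Nat.choose (2 * (k + 1)) (k + 1) : ℚ)
          = 2 * (2 * (k : ℚ) + 1) * (Nat.choose (2 * k) k : ℚ) := by
        have := Nat.succ_mul_centralBinom_succ k
        simp only [Nat.centralBinom] at this
        exact_mod_cast this
      rw [eq_div_iff hk1]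
      linear_combination c
    simp only [Fq, Gq]
    push_cast
    rw [e1, e2, e3, e4, e5, e6, e7]
    rcases le_or_gt k (n + 1) with hk2 | hk2
    · have hu : ((n + 1 - k : ℕ) : ℚ) = (n : ℚ) + 1 - k := by
        push_cast [Nat.cast_sub hk2]; ring
      have hv : ((n + 2 - k : ℕ) : ℚ) = (n : ℚ) + 2 - k := by
        push_cast [Nat.cast_sub (by omega : k ≤ n + 2)]; ring
      rw [hu, hv]
      field_simp
      ring
    · have hke : k = n + 2 := by omega
      subst hke
      have hu : ((n + 1 - (n + 2) : ℕ) : ℚ) = 0 := by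
        norm_num [show n + 1 - (n + 2) = 0 by omega]
      have hv : ((n + 2 - (n + 2) : ℕ) : ℚ) = 0 := by
        norm_num [show n + 2 - (n + 2) = 0 by omega]
      rw [hu, hv]
      push_cast
      field_simp
      ring
  · -- k ≥ n + 3 : everything vanishes
    have c1 : Nat.choose n k = 0 := Nat.choose_eq_zero_of_lt (by omega)
    have c2 : Nat.choose (n + 1) k = 0 := Nat.choose_eq_zero_of_lt (by omega)
    have c3 : Nat.choose (n + 2) k = 0 := Nat.choose_eq_zero_of_lt (by omega)
    have c4 : Nat.choose (n + 2) (k + 1) = 0 := Nat.choose_eq_zero_of_lt (by omega)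
    simp [Fq, Gq, c1, c2, c3, c4]

private lemma Fq_zero (m k : ℕ) (h : m < k) : Fq m k = 0 := by
  simp [Fq, Nat.choose_eq_zero_of_lt h]

private lemma sum_ext (m N : ℕ) (h : m + 1 ≤ N) :
    ∑ k ∈ Finset.range N, Fq m k = Sq m := by
  rw [Sq]
  symm
  apply Finset.sum_subset (Finset.range_subset_range.2 h)
  intro k hk hk'
  simp only [Finset.mem_range, not_lt] at hk'
  exact Fq_zero m k (by omega)

private lemma Srec (n : ℕ) :
    ((n : ℚ) + 2) * ((n : ℚ) + 3) * Sq (n + 2)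
      = (n : ℚ) * ((n : ℚ) + 1) * Sq n + (2 * (n : ℚ) + 3) * Sq (n + 1) := by
  have key : ∑ k ∈ Finset.range (n + 3),
      ((n : ℚ) * (n + 1) * Fq n k + (2 * n + 3) * Fq (n + 1) k
        - (n + 2) * (n + 3) * Fq (n + 2) k) = 0 := by
    rw [Finset.sum_congr rfl (fun k _ => step n k), ← Finset.mul_sum,
      Finset.sum_range_sub (fun k => Gq n k)]
    have h1 : Gq n (n + 3) = 0 := by
      simp [Gq, Nat.choose_eq_zero_of_lt (show n + 2 < n + 3 by omega)]
    have h2 : Gq n 0 = 0 := by simp [Gq]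
    rw [h1, h2]
    ring
  have s0 : ∑ k ∈ Finset.range (n + 3), Fq n k = Sq n := sum_ext n (n + 3) (by omega)
  have s1 : ∑ k ∈ Finset.range (n + 3), Fq (n + 1) k = Sq (n + 1) :=
    sum_ext (n + 1) (n + 3) (by omega)
  have s2 : ∑ k ∈ Finset.range (n + 3), Fq (n + 2) k = Sq (n + 2) :=
    sum_ext (n + 2) (n + 3) (by omega)
  have expand : ∑ k ∈ Finset.range (n + 3),
      ((n : ℚ) * (n + 1) * Fq n k + (2 * n + 3) * Fq (n + 1) k
        - (n + 2) * (n + 3) * Fq (n + 2) k)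
      = (n : ℚ) * (n + 1) * Sq n + (2 * (n : ℚ) + 3) * Sq (n + 1)
        - ((n : ℚ) + 2) * ((n : ℚ) + 3) * Sq (n + 2) := by
    rw [← s0, ← s1, ← s2]
    rw [Finset.sum_sub_distrib, Finset.sum_add_distrib, ← Finset.mul_sum, ← Finset.mul_sum,
      ← Finset.mul_sum]
  rw [expand] at key
  linarith

private lemma Trec (n : ℕ) :
    ((n : ℚ) + 2) * ((n : ℚ) + 3) * Tq (n + 2)
      = (n : ℚ) * ((n : ℚ) + 1) * Tq n + (2 * (n : ℚ) + 3) * Tq (n + 1) := by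
  have hc : ∀ m : ℕ, (Nat.centralBinom (m + 1) : ℚ)
      = 2 * (2 * (m : ℚ) + 1) * (Nat.centralBinom m : ℚ) / ((m : ℚ) + 1) := by
    intro m
    rw [eq_div_iff (by positivity : ((m : ℚ) + 1) ≠ 0)]
    have := Nat.succ_mul_centralBinom_succ m
    have c : ((m : ℚ) + 1) * (Nat.centralBinom (m + 1) : ℚ)
        = 2 * (2 * (m : ℚ) + 1) * (Nat.centralBinom m : ℚ) := by exact_mod_cast this
    linear_combination c
  rcases Nat.even_or_odd n with ⟨m, rfl⟩ | ⟨m, rfl⟩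
  · -- n = m + m
    have d0 : (m + m) % 2 = 0 := by omega
    have d0' : (m + m) / 2 = m := by omega
    have d1 : (m + m + 1) % 2 = 1 := by omega
    have d1' : (m + m + 1) / 2 = m := by omega
    have d2 : (m + m + 2) % 2 = 0 := by omega
    have d2' : (m + m + 2) / 2 = m + 1 := by omega
    simp only [Tq, d0, d0', d1, d1', d2, d2', if_true, if_neg (by omega : ¬(1 : ℕ) = 0)]
    rw [hc m]
    have h16 : (16 : ℚ) ^ (m + 1) = 16 ^ m * 16 := pow_succ 16 m
    rw [h16]
    push_cast
    have h16' : (16 : ℚ) ^ m ≠ 0 := by positivity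
    have hm1 : ((m : ℚ) + 1) ≠ 0 := by positivity
    have hmm : ((m : ℚ) + (m : ℚ) + 1 + 1) ≠ 0 := by positivity
    field_simp
    ring
  · -- n = 2 * m + 1
    have d0 : (2 * m + 1) % 2 = 1 := by omega
    have d0' : (2 * m + 1) / 2 = m := by omega
    have d1 : (2 * m + 1 + 1) % 2 = 0 := by omega
    have d1' : (2 * m + 1 + 1) / 2 = m + 1 := by omega
    have d2 : (2 * m + 1 + 2) % 2 = 1 := by omega
    have d2' : (2 * m + 1 + 2) / 2 = m + 1 := by omega
    simp only [Tq, d0, d0', d1, d1', d2, d2', if_true, if_neg (by omega : ¬(1 : ℕ) = 0)]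
    rw [hc m]
    have h16 : (16 : ℚ) ^ (m + 1) = 16 ^ m * 16 := pow_succ 16 m
    rw [h16]
    push_cast
    have h16' : (16 : ℚ) ^ m ≠ 0 := by positivity
    have hm1 : ((m : ℚ) + 1) ≠ 0 := by positivity
    have hmm : (2 * (m : ℚ) + 1 + 1) ≠ 0 := by positivity
    have hmm2 : (2 * (m : ℚ) + 1 + 2 + 1) ≠ 0 := by positivity
    field_simp
    ring

private lemma base0 : Sq 0 = Tq 0 := by
  norm_num [Sq, Tq, Fq, Nat.centralBinom, Finset.sum_range_succ]

private lemma base1 : Sq 1 = Tq 1 := by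
  norm_num [Sq, Tq, Fq, Nat.centralBinom, Finset.sum_range_succ]

private lemma main (n : ℕ) : Sq n = Tq n := by
  have H : ∀ n, Sq n = Tq n ∧ Sq (n + 1) = Tq (n + 1) := by
    intro n
    induction n with
    | zero => exact ⟨base0, base1⟩
    | succ n ih =>
      refine ⟨ih.2, ?_⟩
      show Sq (n + 2) = Tq (n + 2)
      have h1 := Srec n
      have h2 := Trec n
      rw [ih.1, ih.2] at h1
      have hne : ((n : ℚ) + 2) * ((n : ℚ) + 3) ≠ 0 := by positivity
      exact mul_left_cancel₀ hne (h1.trans h2.symm)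
  exact (H n).1

theorem id1_odd (n : ℕ) (hn : Odd n) (hn0 : 0 < n) :
    ∑ k ∈ Finset.range (n + 1),
        (Nat.choose n k * Nat.choose (n + k) k * Nat.choose (2 * k) k : ℚ)
          / ((-4) ^ k * (k + 1))
      = ((n : ℚ) / (n + 1)) * (Nat.choose (n - 1) ((n - 1) / 2) : ℚ) ^ 2 / 16 ^ ((n - 1) / 2) := by
  obtain ⟨m, rfl⟩ := hn
  have h := main (2 * m + 1)
  have hL : ∑ k ∈ Finset.range (2 * m + 1 + 1),
      (Nat.choose (2 * m + 1) k * Nat.choose (2 * m + 1 + k) k * Nat.choose (2 * k) k : ℚ)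
        / ((-4) ^ k * (k + 1)) = Sq (2 * m + 1) := rfl
  rw [hL, h, Tq, if_neg (by omega : ¬(2 * m + 1) % 2 = 0),
    show (2 * m + 1) / 2 = m by omega, show 2 * m + 1 - 1 = 2 * m by omega,
    show (2 * m) / 2 = m by omega, Nat.centralBinom]
end

section
/- For every even nonnegative integer n, the sum over k from 0 to n of k^3 * binomial(n,k)*binomial(n+k,k)*binomial(2k,k) / (-4)^k equals (n^2*(n+1)^2*(2n+1)^2 / 15) * binomial(n, n/2)^2 / 16^(n/2) (as rational numbers). -/
open Finset

private def Ff (n k : ℕ) : ℚ :=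
  (k : ℚ) ^ 3 * ((Nat.choose n k : ℚ) * (Nat.choose (n + k) k : ℚ) * (Nat.choose (2 * k) k : ℚ))
    / (-4) ^ k

private def Hh (n k : ℕ) : ℚ :=
  2 * ((n : ℚ) + 1) * ((n : ℚ) + 2) * (2 * (n : ℚ) + 3) * (1 - (k : ℚ)) ^ 3
    / (((n : ℚ) + 1 + k) * ((n : ℚ) + 2 + k)) * Ff (n + 2) k

private lemma castA (n k : ℕ) :
    (Nat.choose n k : ℚ) * ((n : ℚ) + 1)
      = (Nat.choose (n + 1) k : ℚ) * ((n : ℚ) + 1 - (k : ℚ)) := by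
  rcases le_or_gt k (n + 1) with h | h
  · have e := congrArg (fun x : ℕ => (x : ℚ)) (Nat.choose_mul_succ_eq n k)
    push_cast [Nat.cast_sub h] at e
    linear_combination e
  · have h1 : Nat.choose n k = 0 := Nat.choose_eq_zero_of_lt (by omega)
    have h2 : Nat.choose (n + 1) k = 0 := Nat.choose_eq_zero_of_lt h
    simp [h1, h2]

private lemma castE (n k : ℕ) :
    (Nat.choose n (k + 1) : ℚ) * ((k : ℚ) + 1)
      = (Nat.choose n k : ℚ) * ((n : ℚ) - (k : ℚ)) := by
  rcases le_or_gt k n with h | h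
  · have e := congrArg (fun x : ℕ => (x : ℚ)) (Nat.choose_succ_right_eq n k)
    push_cast [Nat.cast_sub h] at e
    linear_combination e
  · have h1 : Nat.choose n (k + 1) = 0 := Nat.choose_eq_zero_of_lt (by omega)
    have h2 : Nat.choose n k = 0 := Nat.choose_eq_zero_of_lt h
    simp [h1, h2]

private lemma key (n k : ℕ) :
    ((n : ℚ) + 1) ^ 4 * Ff (n + 2) k
      + (6 * (n : ℚ) ^ 3 + 27 * (n : ℚ) ^ 2 + 37 * (n : ℚ) + 15) * Ff (n + 1) k
      - ((n : ℚ) + 2) ^ 4 * Ff n k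
      = Hh n (k + 1) - Hh n k := by
  have hk1 : ((k : ℚ) + 1) ≠ 0 := by positivity
  have hn1 : ((n : ℚ) + 1) ≠ 0 := by positivity
  have hn2 : ((n : ℚ) + 2) ≠ 0 := by positivity
  have hn1k : ((n : ℚ) + 1 + (k : ℚ)) ≠ 0 := by positivity
  have hn2k : ((n : ℚ) + 2 + (k : ℚ)) ≠ 0 := by positivity
  have hn3k : ((n : ℚ) + 3 + (k : ℚ)) ≠ 0 := by positivity
  have hp : ((-4 : ℚ)) ^ k ≠ 0 := pow_ne_zero _ (by norm_num)
  -- product-form relations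
  have pB : (Nat.choose (n + 1) k : ℚ) * ((n : ℚ) + 2)
      = (Nat.choose (n + 2) k : ℚ) * ((n : ℚ) + 2 - k) := by
    have e := castA (n + 1) k
    push_cast at e
    linear_combination e
  have pA : (Nat.choose n k : ℚ) * (((n : ℚ) + 1) * ((n : ℚ) + 2))
      = (Nat.choose (n + 2) k : ℚ) * (((n : ℚ) + 1 - k) * ((n : ℚ) + 2 - k)) := by
    have e := castA n k
    linear_combination ((n : ℚ) + 2) * e + ((n : ℚ) + 1 - k) * pB
  have pD1 : (Nat.choose (n + 1 + k) k : ℚ) * ((n : ℚ) + 2 + k)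
      = (Nat.choose (n + 2 + k) k : ℚ) * ((n : ℚ) + 2) := by
    have e := castA (n + 1 + k) k
    rw [show n + 1 + k + 1 = n + 2 + k from by omega] at e
    push_cast at e
    linear_combination e
  have pD0 : (Nat.choose (n + k) k : ℚ) * (((n : ℚ) + 1 + k) * ((n : ℚ) + 2 + k))
      = (Nat.choose (n + 2 + k) k : ℚ) * (((n : ℚ) + 1) * ((n : ℚ) + 2)) := by
    have e := castA (n + k) k
    rw [show n + k + 1 = n + 1 + k from by omega] at e
    push_cast at e
    linear_combination ((n : ℚ) + 2 + k) * e + ((n : ℚ) + 1) * pD1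
  have pE : (Nat.choose (n + 2) (k + 1) : ℚ) * ((k : ℚ) + 1)
      = (Nat.choose (n + 2) k : ℚ) * ((n : ℚ) + 2 - k) := by
    have e := castE (n + 2) k
    push_cast at e
    linear_combination e
  have pF : (Nat.choose (n + 2 + (k + 1)) (k + 1) : ℚ) * ((k : ℚ) + 1)
      = (Nat.choose (n + 2 + k) k : ℚ) * ((n : ℚ) + 3 + k) := by
    have eN : (n + 2 + k + 1) * Nat.choose (n + 2 + k) k
        = Nat.choose (n + 2 + k + 1) (k + 1) * (k + 1) := Nat.add_one_mul_choose_eq (n + 2 + k) k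
    rw [show n + 2 + k + 1 = n + 2 + (k + 1) from by omega] at eN
    have e2 := congrArg (fun x : ℕ => (x : ℚ)) eN
    push_cast at e2
    linear_combination -e2
  have pG : (Nat.choose (2 * (k + 1)) (k + 1) : ℚ) * ((k : ℚ) + 1)
      = 2 * (2 * (k : ℚ) + 1) * (Nat.choose (2 * k) k : ℚ) := by
    have e := Nat.succ_mul_centralBinom_succ k
    simp only [Nat.centralBinom] at e
    have e2 := congrArg (fun x : ℕ => (x : ℚ)) e
    push_cast at e2
    linear_combination e2
  -- division-form substitutions
  have hA : (Nat.choose n k : ℚ)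
      = ((n : ℚ) + 1 - k) * ((n : ℚ) + 2 - k) * (Nat.choose (n + 2) k : ℚ)
        / (((n : ℚ) + 1) * ((n : ℚ) + 2)) := by
    field_simp
    linear_combination pA
  have hB : (Nat.choose (n + 1) k : ℚ)
      = ((n : ℚ) + 2 - k) * (Nat.choose (n + 2) k : ℚ) / ((n : ℚ) + 2) := by
    field_simp
    linear_combination pB
  have hD0 : (Nat.choose (n + k) k : ℚ)
      = ((n : ℚ) + 1) * ((n : ℚ) + 2) * (Nat.choose (n + 2 + k) k : ℚ)
        / (((n : ℚ) + 1 + k) * ((n : ℚ) + 2 + k)) := by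
    field_simp
    linear_combination pD0
  have hD1 : (Nat.choose (n + 1 + k) k : ℚ)
      = ((n : ℚ) + 2) * (Nat.choose (n + 2 + k) k : ℚ) / ((n : ℚ) + 2 + k) := by
    field_simp
    linear_combination pD1
  have hE : (Nat.choose (n + 2) (k + 1) : ℚ)
      = ((n : ℚ) + 2 - k) * (Nat.choose (n + 2) k : ℚ) / ((k : ℚ) + 1) := by
    field_simp
    linear_combination pE
  have hF : (Nat.choose (n + 2 + (k + 1)) (k + 1) : ℚ)
      = ((n : ℚ) + 3 + k) * (Nat.choose (n + 2 + k) k : ℚ) / ((k : ℚ) + 1) := by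
    field_simp
    linear_combination pF
  have hG : (Nat.choose (2 * (k + 1)) (k + 1) : ℚ)
      = 2 * (2 * (k : ℚ) + 1) * (Nat.choose (2 * k) k : ℚ) / ((k : ℚ) + 1) := by
    field_simp
    linear_combination pG
  simp only [Ff, Hh]
  push_cast
  rw [hA, hB, hD0, hD1, hE, hF, hG, pow_succ]
  field_simp
  ring

private def sA (n : ℕ) : ℚ := ∑ k ∈ Finset.range (n + 1), Ff n k

private lemma sA_ext (n : ℕ) : sA n = ∑ k ∈ Finset.range (n + 3), Ff n k := by
  rw [show n + 3 = (n + 1) + 1 + 1 from by omega, Finset.sum_range_succ, Finset.sum_range_succ]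
  have h1 : Ff n (n + 1) = 0 := by
    simp [Ff, Nat.choose_eq_zero_of_lt (by omega : n < n + 1)]
  have h2 : Ff n (n + 1 + 1) = 0 := by
    simp [Ff, Nat.choose_eq_zero_of_lt (by omega : n < n + 1 + 1)]
  rw [h1, h2, sA]
  ring

private lemma recA (n : ℕ) :
    ((n : ℚ) + 1) ^ 4 * sA (n + 2)
      + (6 * (n : ℚ) ^ 3 + 27 * (n : ℚ) ^ 2 + 37 * (n : ℚ) + 15) * sA (n + 1)
      - ((n : ℚ) + 2) ^ 4 * sA n = 0 := by
  have h2 : sA (n + 2) = ∑ k ∈ Finset.range (n + 3), Ff (n + 2) k := by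
    rw [sA, show n + 2 + 1 = n + 3 from by omega]
  have h1 : sA (n + 1) = ∑ k ∈ Finset.range (n + 3), Ff (n + 1) k := by
    rw [sA_ext (n + 1), show n + 1 + 3 = n + 3 + 1 from by omega, Finset.sum_range_succ]
    have : Ff (n + 1) (n + 3) = 0 := by
      simp [Ff, Nat.choose_eq_zero_of_lt (by omega : n + 1 < n + 3)]
    rw [this]; ring
  have h0 : sA n = ∑ k ∈ Finset.range (n + 3), Ff n k := sA_ext n
  rw [h0, h1, h2, Finset.mul_sum, Finset.mul_sum, Finset.mul_sum,
    ← Finset.sum_add_distrib, ← Finset.sum_sub_distrib]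
  have := Finset.sum_congr rfl (fun k (_ : k ∈ Finset.range (n + 3)) => key n k)
  rw [this, Finset.sum_range_sub (Hh n)]
  have hz0 : Hh n 0 = 0 := by simp [Hh, Ff]
  have hz1 : Hh n (n + 3) = 0 := by
    simp [Hh, Ff, Nat.choose_eq_zero_of_lt (by omega : n + 2 < n + 3)]
  rw [hz0, hz1]; ring

private lemma mainA (m : ℕ) :
    sA (2 * m) = (2 * (m : ℚ)) ^ 2 * (2 * (m : ℚ) + 1) ^ 2 * (4 * (m : ℚ) + 1) ^ 2 / 15
        * (Nat.choose (2 * m) m : ℚ) ^ 2 / 16 ^ m ∧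
    sA (2 * m + 1) = -((2 * (m : ℚ) + 1) ^ 2
          * (4 * (2 * (m : ℚ) + 1) ^ 4 + 8 * (2 * (m : ℚ) + 1) ^ 3
            + 3 * (2 * (m : ℚ) + 1) ^ 2 - (2 * (m : ℚ) + 1) + 1) / 15)
        * (Nat.choose (2 * m) m : ℚ) ^ 2 / 16 ^ m := by
  induction m with
  | zero =>
    constructor <;>
      norm_num [sA, Ff, Finset.sum_range_succ, Finset.sum_range_zero, Nat.choose]
  | succ m ih =>
    obtain ⟨ih0, ih1⟩ := ih
    have hm1 : ((m : ℚ) + 1) ≠ 0 := by positivity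
    have h16 : ((16 : ℚ)) ^ m ≠ 0 := by positivity
    have hchoose : (Nat.choose (2 * m + 2) (m + 1) : ℚ)
        = 2 * (2 * (m : ℚ) + 1) * (Nat.choose (2 * m) m : ℚ) / ((m : ℚ) + 1) := by
      have e := Nat.succ_mul_centralBinom_succ m
      simp only [Nat.centralBinom] at e
      rw [show 2 * (m + 1) = 2 * m + 2 from by ring] at e
      have e2 := congrArg (fun x : ℕ => (x : ℚ)) e
      push_cast at e2
      field_simp
      linear_combination e2
    have hr0 := recA (2 * m)
    push_cast at hr0
    rw [ih0, ih1] at hr0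
    have hne0 : (2 * (m : ℚ) + 1) ^ 4 ≠ 0 := by positivity
    have hr0' : (2 * (m : ℚ) + 1) ^ 4 * sA (2 * m + 2)
        = (2 * (m : ℚ) + 2) ^ 4 * ((2 * (m : ℚ)) ^ 2 * (2 * (m : ℚ) + 1) ^ 2
              * (4 * (m : ℚ) + 1) ^ 2 / 15 * (Nat.choose (2 * m) m : ℚ) ^ 2 / 16 ^ m)
          - (6 * (2 * (m : ℚ)) ^ 3 + 27 * (2 * (m : ℚ)) ^ 2 + 37 * (2 * (m : ℚ)) + 15)
            * (-((2 * (m : ℚ) + 1) ^ 2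
                  * (4 * (2 * (m : ℚ) + 1) ^ 4 + 8 * (2 * (m : ℚ) + 1) ^ 3
                    + 3 * (2 * (m : ℚ) + 1) ^ 2 - (2 * (m : ℚ) + 1) + 1) / 15)
                * (Nat.choose (2 * m) m : ℚ) ^ 2 / 16 ^ m) := by
      linear_combination hr0
    have c1 : sA (2 * m + 2)
        = (2 * ((m : ℚ) + 1)) ^ 2 * (2 * ((m : ℚ) + 1) + 1) ^ 2 * (4 * ((m : ℚ) + 1) + 1) ^ 2 / 15
          * (Nat.choose (2 * m + 2) (m + 1) : ℚ) ^ 2 / 16 ^ (m + 1) := by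
      apply mul_left_cancel₀ hne0
      rw [hr0', hchoose, pow_succ]
      field_simp
      ring
    have hr1 := recA (2 * m + 1)
    rw [show 2 * m + 1 + 2 = 2 * m + 3 from by omega,
      show 2 * m + 1 + 1 = 2 * m + 2 from by omega] at hr1
    push_cast at hr1
    rw [c1, ih1] at hr1
    have hne1 : (2 * (m : ℚ) + 2) ^ 4 ≠ 0 := by positivity
    have hr1' : (2 * (m : ℚ) + 2) ^ 4 * sA (2 * m + 3)
        = (2 * (m : ℚ) + 3) ^ 4
            * (-((2 * (m : ℚ) + 1) ^ 2
                  * (4 * (2 * (m : ℚ) + 1) ^ 4 + 8 * (2 * (m : ℚ) + 1) ^ 3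
                    + 3 * (2 * (m : ℚ) + 1) ^ 2 - (2 * (m : ℚ) + 1) + 1) / 15)
                * (Nat.choose (2 * m) m : ℚ) ^ 2 / 16 ^ m)
          - (6 * (2 * (m : ℚ) + 1) ^ 3 + 27 * (2 * (m : ℚ) + 1) ^ 2
              + 37 * (2 * (m : ℚ) + 1) + 15)
            * ((2 * ((m : ℚ) + 1)) ^ 2 * (2 * ((m : ℚ) + 1) + 1) ^ 2
                * (4 * ((m : ℚ) + 1) + 1) ^ 2 / 15
                * (Nat.choose (2 * m + 2) (m + 1) : ℚ) ^ 2 / 16 ^ (m + 1)) := by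
      linear_combination hr1
    have c2 : sA (2 * m + 3)
        = -((2 * ((m : ℚ) + 1) + 1) ^ 2
              * (4 * (2 * ((m : ℚ) + 1) + 1) ^ 4 + 8 * (2 * ((m : ℚ) + 1) + 1) ^ 3
                + 3 * (2 * ((m : ℚ) + 1) + 1) ^ 2 - (2 * ((m : ℚ) + 1) + 1) + 1) / 15)
            * (Nat.choose (2 * m + 2) (m + 1) : ℚ) ^ 2 / 16 ^ (m + 1) := by
      apply mul_left_cancel₀ hne1
      rw [hr1', hchoose, pow_succ]
      field_simp
      ring
    constructor
    · rw [show 2 * (m + 1) = 2 * m + 2 from by ring, c1]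
      push_cast
      ring
    · rw [show 2 * (m + 1) + 1 = 2 * m + 3 from by ring, c2,
        show 2 * (m + 1) = 2 * m + 2 from by ring]
      push_cast
      ring

theorem id4_even (n : ℕ) (hn : Even n) :
    ∑ k ∈ Finset.range (n + 1),
        (k : ℚ) ^ 3 * (Nat.choose n k * Nat.choose (n + k) k * Nat.choose (2 * k) k : ℚ)
          / (-4) ^ k
      = ((n : ℚ) ^ 2 * (n + 1) ^ 2 * (2 * (n : ℚ) + 1) ^ 2 / 15)
          * (Nat.choose n (n / 2) : ℚ) ^ 2 / 16 ^ (n / 2) := by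
  obtain ⟨m, rfl⟩ := hn
  rw [show m + m = 2 * m from by ring]
  rw [show 2 * m / 2 = m from by omega]
  have h := (mainA m).1
  rw [show (∑ k ∈ Finset.range (2 * m + 1),
      (k : ℚ) ^ 3 * (Nat.choose (2 * m) k * Nat.choose (2 * m + k) k * Nat.choose (2 * k) k : ℚ)
        / (-4) ^ k) = sA (2 * m) from rfl, h]
  push_cast
  ring
end
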